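/- Let V be a nonzero finite-dimensional vector space over a field K equipped with a separated and exhaustive ℝ-filtration. For any basis e = (e_1, …, e_n) of V (written as a column vector), there exists an upper triangular matrix A ∈ M_{n×n}(K) with all diagonal entries equal to 1 such that the basis A·e is a maximal basis of V. -/

import Mathlib

open MeasureTheory
open scoped ENNReal

/-- The index function of an `ℝ`-filtration `F` of a vector space `V`:
`λ(x) = sup {r ∈ ℝ : x ∈ F r}` in `ℝ ∪ {±∞}`, with `sup ∅ = -∞`. -/
noncomputable def filtIndex {K V : Type*} [Field K] [AddCommGroup V] [Module K V]
    (F : ℝ → Submodule K V) (x : V) : EReal :=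
  sSup ((fun r : ℝ => (r : EReal)) '' {r : ℝ | x ∈ F r})

section aux
variable {K V : Type*} [Field K] [AddCommGroup V] [Module K V] {F : ℝ → Submodule K V}

lemma mem_of_lt_filtIndex (hF : Antitone F) {x : V} {s : ℝ}
    (h : (s : EReal) < filtIndex F x) : x ∈ F s := by
  obtain ⟨_, ⟨r, hr, rfl⟩, hlt⟩ := lt_sSup_iff.mp h
  exact hF (le_of_lt (by exact_mod_cast (by simpa using hlt : (s:EReal) < (r:EReal)))) hr

lemma le_filtIndex_of_forall (hF : Antitone F) {x : V} {t : ℝ}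
    (h : ∀ s : ℝ, s < t → x ∈ F s) : (t : EReal) ≤ filtIndex F x := by
  by_contra hc
  push_neg at hc
  obtain ⟨s, hs1, hs2⟩ := EReal.exists_between_coe_real hc
  have hmem : ((s : ℝ) : EReal) ∈ ((fun r : ℝ => (r : EReal)) '' {r : ℝ | x ∈ F r}) :=
    ⟨s, h s (by exact_mod_cast hs2), rfl⟩
  exact absurd (le_sSup hmem) (not_le.mpr hs1)

lemma filtIndex_smul (F : ℝ → Submodule K V) {c : K} (hc : c ≠ 0) (x : V) :
    filtIndex F (c • x) = filtIndex F x := by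
  unfold filtIndex
  congr 1
  ext r
  simp only [Set.mem_image, Set.mem_setOf_eq]
  exact ⟨fun ⟨a, ha, h⟩ => ⟨a, by simpa [hc] using (Submodule.smul_mem_iff _ hc).mp ha, h⟩,
    fun ⟨a, ha, h⟩ => ⟨a, (Submodule.smul_mem_iff _ hc).mpr ha, h⟩⟩

lemma filtIndex_ne_top (hF : Antitone F) (hsep : (⋂ r : ℝ, (F r : Set V)) = {0}) {x : V} (hx : x ≠ 0) :
    filtIndex F x ≠ ⊤ := by
  intro h
  have : ∀ r : ℝ, x ∈ F r := by
    intro r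
    exact mem_of_lt_filtIndex hF (h ▸ EReal.coe_lt_top r)
  have : x ∈ (⋂ r : ℝ, (F r : Set V)) := Set.mem_iInter.mpr this
  rw [hsep] at this
  exact hx this

lemma filtIndex_ne_bot (hexh : (⋃ r : ℝ, (F r : Set V)) = Set.univ) (x : V) :
    filtIndex F x ≠ ⊥ := by
  have : x ∈ (⋃ r : ℝ, (F r : Set V)) := hexh ▸ Set.mem_univ x
  obtain ⟨_, ⟨r, rfl⟩, hr⟩ := this
  intro h
  have := le_sSup (s := ((fun r : ℝ => (r : EReal)) '' {r : ℝ | x ∈ F r})) ⟨r, hr, rfl⟩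
  rw [show sSup _ = filtIndex F x from rfl, h, le_bot_iff] at this
  exact EReal.coe_ne_bot r this

end aux

section fin
variable {K V : Type*} [Field K] [AddCommGroup V] [Module K V] {F : ℝ → Submodule K V}

lemma rangeF_finite [FiniteDimensional K V] (hF : Antitone F) : (Set.range F).Finite := by
  apply Set.Finite.of_finite_image (f := fun W : Submodule K V => Module.finrank K W)
  · exact Set.Finite.subset (Set.finite_Iic (Module.finrank K V)) (by
      rintro _ ⟨W, ⟨r, rfl⟩, rfl⟩
      exact Submodule.finrank_le _)
  · rintro _ ⟨r1, rfl⟩ _ ⟨r2, rfl⟩ h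
    rcases le_total r1 r2 with hr | hr
    · exact (Submodule.eq_of_le_of_finrank_le (hF hr) (le_of_eq h)).symm
    · exact Submodule.eq_of_le_of_finrank_le (hF hr) (ge_of_eq h)

lemma filtIndex_range_finite [FiniteDimensional K V] (hF : Antitone F) :
    (Set.range (filtIndex F)).Finite := by
  have hC : (Set.range F).Finite := rangeF_finite hF
  set ψ : Submodule K V → EReal := fun W => sSup ((fun r : ℝ => (r : EReal)) '' {r | W ≤ F r})
  apply Set.Finite.subset ((hC.image ψ).insert ⊥)
  rintro _ ⟨x, rfl⟩
  by_cases hx : ∃ r : ℝ, x ∈ F r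
  · have hS : {W ∈ Set.range F | x ∈ W}.Finite := hC.subset (Set.sep_subset _ _)
    have hSne : {W ∈ Set.range F | x ∈ W}.Nonempty := by
      obtain ⟨r, hr⟩ := hx; exact ⟨F r, ⟨r, rfl⟩, hr⟩
    obtain ⟨a, haS, hamin⟩ := hS.exists_minimalFor id _ hSne
    have hmin : ∀ W ∈ {W ∈ Set.range F | x ∈ W}, a ≤ W := by
      intro W hW
      obtain ⟨r1, hr1⟩ := haS.1
      obtain ⟨r2, hr2⟩ := hW.1
      rcases le_total r1 r2 with hr | hr
      · exact hamin hW (hr2 ▸ hr1 ▸ hF hr)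
      · exact hr2 ▸ hr1 ▸ hF hr
    have hset : {r : ℝ | x ∈ F r} = {r : ℝ | a ≤ F r} := by
      ext r
      constructor
      · intro hr
        exact hmin (F r) ⟨⟨r, rfl⟩, hr⟩
      · intro hr
        exact hr haS.2
    refine Set.mem_insert_iff.mpr (Or.inr ⟨a, haS.1, ?_⟩)
    simp only [ψ, filtIndex, hset]
  · push_neg at hx
    have : {r : ℝ | x ∈ F r} = ∅ := Set.eq_empty_iff_forall_notMem.mpr hx
    left
    simp [filtIndex, this]

lemma exists_filtIndex_max [FiniteDimensional K V] (hF : Antitone F) {s : Set V}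
    (hs : s.Nonempty) : ∃ x ∈ s, ∀ y ∈ s, filtIndex F y ≤ filtIndex F x := by
  have hT : (filtIndex F '' s).Finite :=
    (filtIndex_range_finite hF).subset (Set.image_subset_range _ _)
  obtain ⟨m, ⟨x, hx, rfl⟩, hmax⟩ := hT.exists_maximalFor id _ (hs.image _)
  refine ⟨x, hx, fun y hy => ?_⟩
  rcases le_or_gt (filtIndex F y) (filtIndex F x) with h | h
  · exact h
  · exact hmax ⟨y, hy, rfl⟩ h.le
end fin

section count
open Finset

lemma sorted_pointwise {n : ℕ} {a b : Fin n → ℝ} (ha : Monotone a) (hb : Monotone b)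
    (h : ∀ t : ℝ, (univ.filter fun i => t ≤ a i).card ≤ (univ.filter fun i => t ≤ b i).card) :
    ∀ k, a k ≤ b k := by
  intro k
  by_contra hlt
  push_neg at hlt
  have h1 : Finset.Ici k ⊆ univ.filter (fun i => a k ≤ a i) := fun i hi =>
    mem_filter.mpr ⟨mem_univ _, ha (Finset.mem_Ici.mp hi)⟩
  have h2 : univ.filter (fun i => a k ≤ b i) ⊆ Finset.Ioi k := by
    intro i hi
    rw [mem_filter] at hi
    rw [Finset.mem_Ioi]
    by_contra hik
    push_neg at hik
    have := hb hik
    linarith [hi.2]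
  have := (card_le_card h1).trans ((h (a k)).trans (card_le_card h2))
  rw [Fin.card_Ici, Fin.card_Ioi] at this
  omega

lemma card_filter_comp_perm {n : ℕ} (p : ℝ → Prop) [DecidablePred p] (a : Fin n → ℝ)
    (σ : Equiv.Perm (Fin n)) :
    (univ.filter fun i => p (a (σ i))).card = (univ.filter fun i => p (a i)).card := by
  apply Finset.card_equiv σ
  intro i
  simp

lemma sum_mono_le {n : ℕ} {a b : Fin n → ℝ}
    (h : ∀ t : ℝ, (univ.filter fun i => t ≤ a i).card ≤ (univ.filter fun i => t ≤ b i).card)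
    {f : ℝ → ℝ} (hf : Monotone f) : ∑ i, f (a i) ≤ ∑ i, f (b i) := by
  classical
  set σ := Tuple.sort a
  set τ := Tuple.sort b
  have ha := Tuple.monotone_sort a
  have hb := Tuple.monotone_sort b
  have hpt : ∀ k, (a ∘ σ) k ≤ (b ∘ τ) k := by
    refine sorted_pointwise ha hb fun t => ?_
    have h1 := card_filter_comp_perm (fun x => t ≤ x) a σ
    have h2 := card_filter_comp_perm (fun x => t ≤ x) b τ
    simpa [Function.comp] using h1.trans_le ((h t).trans h2.ge)
  calc ∑ i, f (a i) = ∑ k, f (a (σ k)) := (Equiv.sum_comp σ (fun i => f (a i))).symm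
    _ ≤ ∑ k, f (b (τ k)) := Finset.sum_le_sum fun k _ => hf (hpt k)
    _ = ∑ i, f (b i) := Equiv.sum_comp τ (fun i => f (b i))

end count

lemma integral_smul_sum_dirac {n : ℕ} (lam : Fin n → ℝ) {f : ℝ → ℝ} (hf : Monotone f)
    {C : ℝ} (hC : ∀ x, |f x| ≤ C) :
    ∫ x, f x ∂((n : ℝ≥0∞)⁻¹ • ∑ i : Fin n, Measure.dirac (lam i)) =
      (n : ℝ)⁻¹ * ∑ i, f (lam i) := by
  have hmeas : Measurable f := hf.measurable
  have hint : ∀ i : Fin n, Integrable f (Measure.dirac (lam i)) := fun i =>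
    Integrable.mono' (integrable_const C) hmeas.aestronglyMeasurable
      (Filter.Eventually.of_forall hC)
  rw [integral_smul_measure, integral_finset_sum_measure (fun i _ => hint i)]
  simp [integral_dirac, ENNReal.toReal_inv, smul_eq_mul]

noncomputable def filtGt {K V : Type*} [Field K] [AddCommGroup V] [Module K V]
    (F : ℝ → Submodule K V) (t : ℝ) : Submodule K V := ⨅ s : {s : ℝ // s < t}, F s

section gt
variable {K V : Type*} [Field K] [AddCommGroup V] [Module K V] {F : ℝ → Submodule K V}

lemma mem_filtGt_iff (hF : Antitone F) {t : ℝ} {x : V} :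
    x ∈ filtGt F t ↔ (t : EReal) ≤ filtIndex F x := by
  rw [filtGt, Submodule.mem_iInf]
  constructor
  · intro h
    exact le_filtIndex_of_forall hF fun s hs => h ⟨s, hs⟩
  · rintro h ⟨s, hs⟩
    exact mem_of_lt_filtIndex hF (lt_of_lt_of_le (by exact_mod_cast hs) h)
end gt


/-- The Borel probability measure `ν_e = (1/n) ∑ᵢ δ_{λ(eᵢ)}` on `ℝ` associated to a
family `e = (e₁, …, e_n)` of vectors of a filtered vector space. -/
noncomputable def basisMeasure {K V : Type*} [Field K] [AddCommGroup V] [Module K V]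
    {n : ℕ} (F : ℝ → Submodule K V) (e : Fin n → V) : Measure ℝ :=
  (n : ℝ≥0∞)⁻¹ • ∑ i : Fin n, Measure.dirac ((filtIndex F (e i)).toReal)

/-- `μ ⪰ ν` : for every bounded increasing function `f : ℝ → ℝ`, `∫ f dν ≤ ∫ f dμ`. -/
def MeasureRightOf (μ ν : Measure ℝ) : Prop :=
  ∀ f : ℝ → ℝ, Monotone f → (∃ C : ℝ, ∀ x, |f x| ≤ C) →
    ∫ x, f x ∂ν ≤ ∫ x, f x ∂μ

/-- A basis `e` of `V` is maximal if `ν_e ⪰ ν_{e'}` for every basis `e'` of `V`. -/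
def MaximalBasis {K V : Type*} [Field K] [AddCommGroup V] [Module K V]
    {n : ℕ} (F : ℝ → Submodule K V) (e : Module.Basis (Fin n) K V) : Prop :=
  ∀ e' : Module.Basis (Fin n) K V, MeasureRightOf (basisMeasure F ⇑e) (basisMeasure F ⇑e')

theorem stmt_7 {K V : Type*} [Field K] [AddCommGroup V] [Module K V] {n : ℕ}
    (hn : 0 < n) (F : ℝ → Submodule K V) (hF : Antitone F)
    (hsep : (⋂ r : ℝ, (F r : Set V)) = {0})
    (hexh : (⋃ r : ℝ, (F r : Set V)) = Set.univ)
    (e : Module.Basis (Fin n) K V) :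
    ∃ A : Matrix (Fin n) (Fin n) K, A.BlockTriangular id ∧ (∀ i, A i i = 1) ∧
      ∃ e' : Module.Basis (Fin n) K V, (∀ i, e' i = ∑ j, A i j • e j) ∧ MaximalBasis F e' := by
  classical
  haveI : FiniteDimensional K V := Module.Finite.of_basis e
  -- the affine sets and maximizers
  set Es : Fin n → Submodule K V := fun i => Submodule.span K (⇑e '' {j | i < j}) with hEs
  have hEine : ∀ i, {w : V | w - e i ∈ Es i}.Nonempty := fun i =>
    ⟨e i, by simp [Submodule.zero_mem]⟩
  choose v hv hvmax using fun i =>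
    exists_filtIndex_max (F := F) hF (hEine i)
  -- the matrix
  set A : Matrix (Fin n) (Fin n) K := fun i j => e.repr (v i) j with hAdef
  have hreprv : ∀ i, e.repr (v i) = Finsupp.single i 1 + e.repr (v i - e i) := by
    intro i
    rw [← e.repr_self i, ← map_add]
    congr 1
    abel
  have hsupp : ∀ i, ((e.repr (v i - e i)).support : Set (Fin n)) ⊆ {j | i < j} := fun i =>
    (Module.Basis.mem_span_image e).mp (hv i)
  have hw0 : ∀ i j, ¬ i < j → e.repr (v i - e i) j = 0 := by
    intro i j hj
    by_contra h
    exact hj (hsupp i (Finsupp.mem_support_iff.mpr h))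
  have htri : A.BlockTriangular id := by
    intro i j hij
    have hji : j < i := hij
    have h1 : e.repr (v i) j = (Finsupp.single i (1:K)) j + e.repr (v i - e i) j := by
      rw [hreprv i]; rfl
    simp only [hAdef]
    rw [h1, Finsupp.single_apply, if_neg (ne_of_gt hji), hw0 i j (not_lt.mpr hji.le), add_zero]
  have hdiag : ∀ i, A i i = 1 := by
    intro i
    have h1 : e.repr (v i) i = (Finsupp.single i (1:K)) i + e.repr (v i - e i) i := by
      rw [hreprv i]; rfl
    simp only [hAdef]
    rw [h1, Finsupp.single_apply, if_pos rfl, hw0 i i (lt_irrefl i), add_zero]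
  have hdet : IsUnit (A.transpose).det := by
    rw [Matrix.det_transpose, Matrix.det_of_upperTriangular htri]
    simp [hdiag]
  -- the new basis
  set e' : Module.Basis (Fin n) K V := e.map (Matrix.toLinearEquiv e A.transpose hdet) with he'def
  have he'app : ∀ i, e' i = ∑ j, A i j • e j := by
    intro i
    rw [he'def, Module.Basis.map_apply, Matrix.toLinearEquiv_apply, Matrix.toLin_self]
    simp [Matrix.transpose_apply]
  have he'v : ∀ i, e' i = v i := by
    intro i
    rw [he'app i]
    simpa [hAdef] using e.sum_repr (v i)
  -- key minimal-support lemma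
  have key : ∀ (x : V) (hx : (e'.repr x).support.Nonempty),
      filtIndex F x ≤ filtIndex F (e' ((e'.repr x).support.min' hx)) := by
    intro x hx
    set s := (e'.repr x).support with hs
    set i0 := s.min' hx with hi0
    set c := e'.repr x i0 with hc
    have hc0 : c ≠ 0 := Finsupp.mem_support_iff.mp (s.min'_mem hx)
    have hxsum : x = ∑ i ∈ s, e'.repr x i • e' i := by
      conv_lhs => rw [← e'.sum_repr x]
      exact (Finset.sum_subset (Finset.subset_univ s)
        (fun i _ hi => by simp [Finsupp.notMem_support_iff.mp hi])).symm
    have hx2 : c⁻¹ • x = e' i0 + ∑ i ∈ s.erase i0, (c⁻¹ * e'.repr x i) • e' i := by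
      conv_lhs => rw [hxsum]
      rw [Finset.smul_sum, ← Finset.add_sum_erase _ _ (s.min'_mem hx)]
      congr 1
      · rw [smul_smul, ← hc, inv_mul_cancel₀ hc0, one_smul]
      · exact Finset.sum_congr rfl fun i _ => by rw [smul_smul]
    have hmem : c⁻¹ • x ∈ {w : V | w - e i0 ∈ Es i0} := by
      have h1 : e' i0 - e i0 ∈ Es i0 := by rw [he'v]; exact hv i0
      have h2 : ∀ i, i0 < i → e' i ∈ Es i0 := by
        intro i hi
        rw [he'v]
        have : v i - e i ∈ Es i0 := by
          apply Submodule.span_mono (Set.image_mono (fun j (hj : i < j) => hi.trans hj))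
          exact hv i
        have he : e i ∈ Es i0 := Submodule.subset_span ⟨i, hi, rfl⟩
        simpa using Submodule.add_mem _ this he
      have : c⁻¹ • x - e i0 =
          (e' i0 - e i0) + ∑ i ∈ s.erase i0, (c⁻¹ * e'.repr x i) • e' i := by
        rw [hx2]; abel
      rw [Set.mem_setOf_eq, this]
      refine Submodule.add_mem _ h1 (Submodule.sum_mem _ fun i hi => ?_)
      refine Submodule.smul_mem _ _ (h2 i ?_)
      exact lt_of_le_of_ne (s.min'_le i (Finset.mem_of_mem_erase hi))
        (Ne.symm (Finset.ne_of_mem_erase hi))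
    calc filtIndex F x = filtIndex F (c⁻¹ • x) := (filtIndex_smul F (inv_ne_zero hc0) x).symm
      _ ≤ filtIndex F (v i0) := hvmax i0 _ hmem
      _ = filtIndex F (e' i0) := by rw [he'v]
  -- span lemma by induction on support size
  have hspan : ∀ (t : ℝ) (m : ℕ) (x : V), (e'.repr x).support.card ≤ m → x ∈ filtGt F t →
      x ∈ Submodule.span K (⇑e' '' {i | (t : EReal) ≤ filtIndex F (e' i)}) := by
    intro t m
    induction m with
    | zero =>
      intro x hcard hmem
      have : e'.repr x = 0 := by
        rw [← Finsupp.support_eq_empty, ← Finset.card_eq_zero]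
        omega
      have hx0 : x = 0 := by
        have := congrArg e'.repr.symm this
        simpa using this
      simp [hx0]
    | succ m ih =>
      intro x hcard hmem
      by_cases h0 : (e'.repr x).support.Nonempty
      · set i0 := (e'.repr x).support.min' h0 with hi0
        have hi0mem : (t : EReal) ≤ filtIndex F (e' i0) :=
          le_trans ((mem_filtGt_iff hF).mp hmem) (key x h0)
        have he'mem : e' i0 ∈ filtGt F t := (mem_filtGt_iff hF).mpr hi0mem
        set y := x - e'.repr x i0 • e' i0 with hy
        have hymem : y ∈ filtGt F t :=
          Submodule.sub_mem _ hmem (Submodule.smul_mem _ _ he'mem)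
        have hysupp : (e'.repr y).support ⊆ (e'.repr x).support.erase i0 := by
          intro j hj
          rw [Finsupp.mem_support_iff] at hj
          have hval0 : e'.repr y = e'.repr x - e'.repr x i0 • Finsupp.single i0 (1:K) := by
            rw [hy, map_sub, _root_.map_smul, e'.repr_self]
          have hval : e'.repr y j = e'.repr x j - e'.repr x i0 * (Finsupp.single i0 (1:K)) j := by
            rw [hval0, Finsupp.sub_apply, Finsupp.smul_apply, smul_eq_mul]
          rcases eq_or_ne j i0 with rfl | hne
          · rw [hval, Finsupp.single_apply, if_pos rfl, mul_one, sub_self] at hj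
            exact absurd rfl hj
          · refine Finset.mem_erase.mpr ⟨hne, Finsupp.mem_support_iff.mpr ?_⟩
            rw [hval, Finsupp.single_apply, if_neg (Ne.symm hne), mul_zero, sub_zero] at hj
            exact hj
        have hycard : (e'.repr y).support.card ≤ m := by
          have h1 := Finset.card_le_card hysupp
          have h2 : ((e'.repr x).support.erase i0).card = (e'.repr x).support.card - 1 := by
            rw [hi0]
            exact Finset.card_erase_of_mem ((e'.repr x).support.min'_mem h0)
          have h3 := Finset.card_pos.mpr h0
          omega
        have hxy : x = y + e'.repr x i0 • e' i0 := by rw [hy]; abel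
        rw [hxy]
        exact Submodule.add_mem _ (ih y hycard hymem)
          (Submodule.smul_mem _ _ (Submodule.subset_span ⟨i0, hi0mem, rfl⟩))
      · have : e'.repr x = 0 := by
          rw [← Finsupp.support_eq_empty]
          exact Finset.not_nonempty_iff_eq_empty.mp h0
        have hx0 : x = 0 := by
          have := congrArg e'.repr.symm this
          simpa using this
        simp [hx0]
  -- counting inequalities
  have hcount_le : ∀ (b : Module.Basis (Fin n) K V) (t : ℝ),
      (Finset.univ.filter fun i => (t : EReal) ≤ filtIndex F (b i)).card ≤
        Module.finrank K (filtGt F t) := by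
    intro b t
    set P : Fin n → Prop := fun i => (t : EReal) ≤ filtIndex F (b i) with hP
    have hmem : ∀ i : {i // P i}, b i.1 ∈ filtGt F t := fun i => (mem_filtGt_iff hF).mpr i.2
    have hli : LinearIndependent K (fun i : {i // P i} => (⟨b i.1, hmem i⟩ : filtGt F t)) := by
      apply LinearIndependent.of_comp (filtGt F t).subtype
      exact (b.linearIndependent.comp Subtype.val Subtype.val_injective)
    have := hli.fintype_card_le_finrank
    simpa [Fintype.card_subtype] using this
  have hcount_ge : ∀ t : ℝ,
      Module.finrank K (filtGt F t) ≤
        (Finset.univ.filter fun i => (t : EReal) ≤ filtIndex F (e' i)).card := by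
    intro t
    set Sf := Finset.univ.filter fun i => (t : EReal) ≤ filtIndex F (e' i) with hSf
    have himg : ⇑e' '' {i | (t : EReal) ≤ filtIndex F (e' i)} = ↑(Sf.image ⇑e') := by
      ext x
      simp [hSf, eq_comm]
    have hle : filtGt F t ≤ Submodule.span K ↑(Sf.image ⇑e') := by
      intro x hx
      rw [← himg]
      exact hspan t n x (by simpa using Finset.card_le_univ (e'.repr x).support) hx
    calc Module.finrank K (filtGt F t)
        ≤ Module.finrank K (Submodule.span K (↑(Sf.image ⇑e') : Set V)) :=
          Submodule.finrank_mono hle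
      _ ≤ (Sf.image ⇑e').card := finrank_span_finset_le_card _
      _ ≤ Sf.card := Finset.card_image_le
  -- index values are finite reals for basis vectors
  have hfin : ∀ (b : Module.Basis (Fin n) K V) (i : Fin n) (t : ℝ),
      (t ≤ (filtIndex F (b i)).toReal ↔ (t : EReal) ≤ filtIndex F (b i)) := by
    intro b i t
    have h1 : filtIndex F (b i) ≠ ⊤ := filtIndex_ne_top hF hsep (b.ne_zero i)
    have h2 : filtIndex F (b i) ≠ ⊥ := filtIndex_ne_bot hexh (b i)
    rw [← EReal.coe_le_coe_iff, EReal.coe_toReal h1 h2]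
  -- conclusion
  refine ⟨A, htri, hdiag, e', he'app, ?_⟩
  intro b f hf hbd
  obtain ⟨C, hC⟩ := hbd
  rw [basisMeasure, basisMeasure, integral_smul_sum_dirac _ hf hC,
    integral_smul_sum_dirac _ hf hC]
  apply mul_le_mul_of_nonneg_left _ (by positivity)
  apply sum_mono_le _ hf
  intro t
  have h1 : (Finset.univ.filter fun i => t ≤ (filtIndex F (b i)).toReal) =
      (Finset.univ.filter fun i => (t : EReal) ≤ filtIndex F (b i)) := by
    apply Finset.filter_congr
    intro i _
    simp [hfin b i t]
  have h2 : (Finset.univ.filter fun i => t ≤ (filtIndex F (e' i)).toReal) =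
      (Finset.univ.filter fun i => (t : EReal) ≤ filtIndex F (e' i)) := by
    apply Finset.filter_congr
    intro i _
    simp [hfin e' i t]
  rw [h1, h2]
  exact (hcount_le b t).trans (hcount_ge t)
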